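/- Let Λ be a finite-dimensional algebra over a field k, E/k a field extension, and M a finite-dimensional left Λ-module. Then M is an injective Λ-module if and only if M ⊗_k E is an injective Λ ⊗_k E-module. -/

import Mathlib

open TensorProduct

section Coind

variable (F R V : Type) [Field F] [Ring R] [Algebra F R] [AddCommGroup V] [Module F V]

/-- Coinduced module: `Hom_F(R, V)` with `R` acting by precomposition with right
multiplication. -/
def Coind : Type := R →ₗ[F] V

namespace Coind

variable {F R V}

instance : AddCommGroup (Coind F R V) := inferInstanceAs (AddCommGroup (R →ₗ[F] V))

/-- Interpret an element of `Coind` as a linear map. -/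
def lin (f : Coind F R V) : R →ₗ[F] V := f

/-- Build an element of `Coind` from a linear map. -/
def mk' (f : R →ₗ[F] V) : Coind F R V := f

@[simp] lemma lin_mk' (f : R →ₗ[F] V) : (mk' f : Coind F R V).lin = f := rfl

@[simp] lemma lin_add (f g : Coind F R V) (x : R) : (f + g).lin x = f.lin x + g.lin x := rfl

@[simp] lemma lin_zero (x : R) : (0 : Coind F R V).lin x = 0 := rfl

@[ext] lemma ext {f g : Coind F R V} (h : ∀ x, f.lin x = g.lin x) : f = g :=
  LinearMap.ext h

instance : SMul R (Coind F R V) :=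
  ⟨fun r f => mk' (f.lin ∘ₗ LinearMap.mulRight F r)⟩

@[simp] lemma lin_smul (r : R) (f : Coind F R V) (x : R) :
    (r • f).lin x = f.lin (x * r) := rfl

instance : Module R (Coind F R V) where
  one_smul f := by ext x; simp
  mul_smul r s f := by ext x; simp [mul_assoc]
  smul_zero r := by ext x; simp
  smul_add r f g := by ext x; simp
  add_smul r s f := by ext x; simp [mul_add]
  zero_smul f := by ext x; simp

theorem module_injective : Module.Injective R (Coind F R V) := by
  constructor
  intro X Y _ _ _ _ f hf g
  letI : Module F X := Module.compHom X (algebraMap F R)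
  letI : Module F Y := Module.compHom Y (algebraMap F R)
  have hsX : ∀ (c : F) (x : X), c • x = algebraMap F R c • x := fun _ _ => rfl
  have hsY : ∀ (c : F) (y : Y), c • y = algebraMap F R c • y := fun _ _ => rfl
  -- `f` as an `F`-linear map
  let f₀ : X →ₗ[F] Y :=
    { toFun := f
      map_add' := map_add f
      map_smul' := fun c x => by simp [hsX, hsY] }
  -- evaluate `g` at 1
  let g₀ : X →ₗ[F] V :=
    { toFun := fun x => (g x).lin 1
      map_add' := fun x y => by simp
      map_smul' := fun c x => by
        have h1 : g (c • x) = algebraMap F R c • g x := by rw [hsX]; exact map_smul g _ x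
        show (g (c • x)).lin 1 = c • (g x).lin 1
        rw [h1, lin_smul, one_mul, Algebra.algebraMap_eq_smul_one, map_smul] }
  obtain ⟨σ, hσ⟩ := f₀.exists_leftInverse_of_injective
    (by rw [LinearMap.ker_eq_bot]; exact hf)
  let h₀ : Y →ₗ[F] V := g₀ ∘ₗ σ
  have hh₀ : ∀ x : X, h₀ (f x) = g₀ x := fun x => by
    have : σ (f₀ x) = x := congrArg (fun t => t x) hσ
    simp only [h₀, LinearMap.comp_apply]
    rw [show f x = f₀ x from rfl, this]
  let inner : Y → Coind F R V := fun y => mk'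
    { toFun := fun x => h₀ (x • y)
      map_add' := fun a b => by
        show h₀ ((a + b) • y) = h₀ (a • y) + h₀ (b • y)
        rw [add_smul, map_add]
      map_smul' := fun c a => by
        show h₀ ((c • a) • y) = c • h₀ (a • y)
        rw [Algebra.smul_def, mul_smul, ← hsY, map_smul] }
  refine ⟨{ toFun := inner
            map_add' := fun y₁ y₂ => by ext x; simp [inner, smul_add]
            map_smul' := fun r y => by ext x; simp [inner, mul_smul] }, ?_⟩
  intro x
  ext z
  show h₀ (z • f x) = (g x).lin z
  rw [← map_smul f, hh₀]
  show (g (z • x)).lin 1 = (g x).lin z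
  rw [map_smul g, lin_smul, one_mul]

end Coind

end Coind

/-- A retract of an injective module is injective. -/
theorem injective_of_retract {R Q Q' : Type} [Ring R] [AddCommGroup Q] [AddCommGroup Q']
    [Module R Q] [Module R Q'] (ι : Q →ₗ[R] Q') (r : Q' →ₗ[R] Q) (hr : ∀ q, r (ι q) = q)
    (hQ' : Module.Injective R Q') : Module.Injective R Q := by
  constructor
  intro X Y _ _ _ _ f hf g
  obtain ⟨h, hh⟩ := hQ'.out f hf (ι ∘ₗ g)
  refine ⟨r ∘ₗ h, fun x => ?_⟩
  simp only [LinearMap.comp_apply] at hh ⊢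
  rw [hh x, hr]

variable (k E L M : Type) [Field k] [Field E] [Algebra k E] [Ring L] [Algebra k L]
  [AddCommGroup M] [Module k M] [Module L M] [IsScalarTower k L M] [SMulCommClass k L M]

/-- The action of `E` on `M ⊗[k] E` through the right-hand tensor factor, as a ring
homomorphism to `k`-linear endomorphisms. -/
noncomputable def rho : E →+* Module.End k (M ⊗[k] E) where
  toFun e := LinearMap.lTensor M (LinearMap.mulLeft k e)
  map_one' := by ext x y; simp
  map_mul' e₁ e₂ := by ext x y; simp [Module.End.mul_apply]
  map_zero' := by ext x y; simp
  map_add' e₁ e₂ := by ext x y; simp [add_mul, tmul_add]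

/-- `M ⊗[k] E` is an `E`-module via the right-hand tensor factor. -/
noncomputable instance eMod : Module E (M ⊗[k] E) := Module.compHom _ (rho k E M)

lemma eMod_smul_tmul (e : E) (m : M) (y : E) :
    e • (m ⊗ₜ[k] y) = m ⊗ₜ[k] (e * y) := rfl

instance : IsScalarTower k E (M ⊗[k] E) := by
  constructor
  intro c e x
  induction x using TensorProduct.induction_on with
  | zero => simp
  | tmul m y => rw [eMod_smul_tmul, eMod_smul_tmul, smul_mul_assoc, ← tmul_smul]
  | add x y hx hy => simp [smul_add, hx, hy]

instance : SMulCommClass L E (M ⊗[k] E) := by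
  constructor
  intro a e x
  induction x using TensorProduct.induction_on with
  | zero => simp
  | tmul m y => rw [eMod_smul_tmul, smul_tmul', smul_tmul', eMod_smul_tmul]
  | add x y hx hy => simp [smul_add, hx, hy]

/-- The natural `L ⊗[k] E`-module structure on `M ⊗[k] E`, for `M` a module over the
`k`-algebra `L` and `E/k` a field extension. -/
noncomputable instance bigMod : Module (L ⊗[k] E) (M ⊗[k] E) := TensorProduct.Algebra.module

lemma bigMod_smul_def (l : L) (e : E) (z : M ⊗[k] E) :
    (l ⊗ₜ[k] e) • z = l • (e • z) := rfl

/-- Re-register the canonical self-module structure with high priority, since `bigMod`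
specialized to `M := L` would otherwise shadow it. -/
noncomputable instance (priority := 2000) selfMod : Module (L ⊗[k] E) (L ⊗[k] E) := Semiring.toModule

/-- `L ⊗[k] E` is an `E`-algebra, with the `E`-action of `eMod`. -/
noncomputable instance algE : Algebra E (L ⊗[k] E) where
  algebraMap := (Algebra.TensorProduct.includeRight : E →ₐ[k] L ⊗[k] E).toRingHom
  smul e w := e • w
  commutes' e w := by
    induction w using TensorProduct.induction_on with
    | zero => simp
    | tmul x y =>
      show ((1 : L) ⊗ₜ[k] e) * (x ⊗ₜ[k] y) = (x ⊗ₜ[k] y) * ((1 : L) ⊗ₜ[k] e)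
      rw [Algebra.TensorProduct.tmul_mul_tmul, Algebra.TensorProduct.tmul_mul_tmul,
        one_mul, mul_one, mul_comm]
    | add w₁ w₂ h₁ h₂ =>
      show _ * (w₁ + w₂) = (w₁ + w₂) * _
      rw [mul_add, add_mul, h₁, h₂]
  smul_def' e w := by
    induction w using TensorProduct.induction_on with
    | zero => simp
    | tmul x y =>
      show x ⊗ₜ[k] (e * y) = ((1 : L) ⊗ₜ[k] e) * (x ⊗ₜ[k] y)
      rw [Algebra.TensorProduct.tmul_mul_tmul, one_mul]
    | add w₁ w₂ h₁ h₂ =>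
      show e • (w₁ + w₂) = _ * (w₁ + w₂)
      rw [smul_add, mul_add, h₁, h₂]

lemma tower_smulE (e : E) (w : L ⊗[k] E) (z : M ⊗[k] E) :
    (e • w) • z = e • (w • z) := by
  have h1 : e • w = ((1 : L) ⊗ₜ[k] e) * w := Algebra.smul_def e w
  rw [h1, mul_smul, bigMod_smul_def, one_smul]

/-- Evaluation at a point, as an additive monoid hom on `Coind`. -/
def Coind.evalAdd {F R V : Type} [Field F] [Ring R] [Algebra F R] [AddCommGroup V]
    [Module F V] (x : R) : Coind F R V →+ V where
  toFun f := f.lin x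
  map_zero' := rfl
  map_add' _ _ := rfl

lemma Coind.lin_sum {F R V : Type} [Field F] [Ring R] [Algebra F R] [AddCommGroup V]
    [Module F V] {ι : Type} (s : Finset ι) (f : ι → Coind F R V) (x : R) :
    (∑ i ∈ s, f i).lin x = ∑ i ∈ s, (f i).lin x :=
  map_sum (Coind.evalAdd x) f s

/-- The unit `M → Hom_k(L, M)`, `m ↦ (l ↦ l • m)`. -/
noncomputable def unitC : M →ₗ[L] Coind k L M where
  toFun m := Coind.mk'
    { toFun := fun l => l • m
      map_add' := fun a b => add_smul a b m
      map_smul' := fun c a => smul_assoc c a m }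
  map_add' m₁ m₂ := by ext l; show l • (m₁ + m₂) = l • m₁ + l • m₂; rw [smul_add]
  map_smul' l' m := by ext l; show l • l' • m = (l * l') • m; rw [mul_smul]

/-- The unit `M ⊗ E → Hom_E(L ⊗ E, M ⊗ E)`, `z ↦ (w ↦ w • z)`. -/
noncomputable def unitE : (M ⊗[k] E) →ₗ[L ⊗[k] E] Coind E (L ⊗[k] E) (M ⊗[k] E) where
  toFun z := Coind.mk'
    { toFun := fun w => w • z
      map_add' := fun w₁ w₂ => add_smul w₁ w₂ z
      map_smul' := fun e w => tower_smulE k E L M e w z }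
  map_add' z₁ z₂ := by ext w; show w • (z₁ + z₂) = w • z₁ + w • z₂; rw [smul_add]
  map_smul' u z := by ext w; show w • u • z = (w * u) • z; rw [mul_smul]

section Forward

variable [FiniteDimensional k L] (r₀ : Coind k L M →ₗ[L] M)

/-- `m ↦ r₀ (l ↦ coordᵢ(l) • m)`, a `k`-linear endomorphism of `M`. -/
noncomputable def coordMap (i : Fin (Module.finrank k L)) : M →ₗ[k] M where
  toFun m := r₀ (Coind.mk' (((Module.finBasis k L).coord i).smulRight m))
  map_add' m₁ m₂ := by
    have h1 : Coind.mk' (((Module.finBasis k L).coord i).smulRight (m₁ + m₂))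
        = Coind.mk' (((Module.finBasis k L).coord i).smulRight m₁)
          + Coind.mk' (((Module.finBasis k L).coord i).smulRight m₂) := by
      ext l
      rw [Coind.lin_add]
      show ((Module.finBasis k L).coord i) l • (m₁ + m₂)
        = ((Module.finBasis k L).coord i) l • m₁ + ((Module.finBasis k L).coord i) l • m₂
      rw [smul_add]
    show r₀ _ = r₀ _ + r₀ _
    rw [h1, map_add]
  map_smul' c m := by
    rw [RingHom.id_apply]
    have h1 : Coind.mk' (((Module.finBasis k L).coord i).smulRight (c • m))
        = algebraMap k L c • Coind.mk' (((Module.finBasis k L).coord i).smulRight m) := by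
      ext x
      show (Module.finBasis k L).coord i x • (c • m)
        = (Module.finBasis k L).coord i (x * algebraMap k L c) • m
      rw [← Algebra.commutes c x, ← Algebra.smul_def, map_smul, smul_eq_mul, mul_smul,
        smul_comm]
    show r₀ _ = c • r₀ _
    rw [h1, map_smul, algebraMap_smul]

lemma coordMap_apply (i : Fin (Module.finrank k L)) (m : M) :
    coordMap k L M r₀ i m = r₀ (Coind.mk' (((Module.finBasis k L).coord i).smulRight m)) := rfl

lemma keyM (l : L) (j : Fin (Module.finrank k L)) (m : M) :
    ∑ i, (Module.finBasis k L).coord j ((Module.finBasis k L) i * l) • coordMap k L M r₀ i m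
      = l • coordMap k L M r₀ j m := by
  set b := Module.finBasis k L with hb
  have step : l • Coind.mk' ((b.coord j).smulRight m)
      = ∑ i, algebraMap k L (b.coord j (b i * l)) • Coind.mk' ((b.coord i).smulRight m) := by
    ext x
    rw [Coind.lin_sum]
    have hx : ∀ i : Fin (Module.finrank k L),
        (algebraMap k L (b.coord j (b i * l)) • Coind.mk' ((b.coord i).smulRight m)).lin x
          = (b.coord j (b i * l) * b.coord i x) • m := by
      intro i
      show b.coord i (x * algebraMap k L (b.coord j (b i * l))) • m = _
      rw [← Algebra.commutes, ← Algebra.smul_def, map_smul, smul_eq_mul]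
    rw [Finset.sum_congr rfl fun i _ => hx i]
    show b.coord j (x * l) • m = _
    have hxl : x * l = ∑ i, b.repr x i • (b i * l) := by
      conv_lhs => rw [← Module.Basis.sum_repr b x]
      rw [Finset.sum_mul]
      exact Finset.sum_congr rfl fun i _ => (smul_mul_assoc _ _ _)
    rw [hxl, map_sum, Finset.sum_smul]
    refine Finset.sum_congr rfl fun i _ => ?_
    rw [map_smul, smul_eq_mul, mul_comm]
    exact congrArg (fun t => ((b.coord j) (b i * l) * t) • m) (b.coord_apply i x).symm
  have h2 : l • coordMap k L M r₀ j m
      = ∑ i, (b.coord j (b i * l)) • coordMap k L M r₀ i m := by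
    rw [coordMap_apply, ← map_smul, step, map_sum]
    exact Finset.sum_congr rfl fun i _ => by
      rw [map_smul, algebraMap_smul, coordMap_apply]
  rw [h2]

lemma rTensor_eMod (f : M →ₗ[k] M) (e : E) (z : M ⊗[k] E) :
    (f.rTensor E) (e • z) = e • (f.rTensor E z) := by
  induction z using TensorProduct.induction_on with
  | zero => rw [smul_zero, map_zero, smul_zero]
  | tmul m y =>
    rw [eMod_smul_tmul, LinearMap.rTensor_tmul, LinearMap.rTensor_tmul, eMod_smul_tmul]
  | add z₁ z₂ h₁ h₂ => rw [smul_add, map_add, h₁, h₂, map_add, smul_add]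

lemma keyT (l : L) (j : Fin (Module.finrank k L)) (z : M ⊗[k] E) :
    ∑ i, algebraMap k E ((Module.finBasis k L).coord j ((Module.finBasis k L) i * l))
        • ((coordMap k L M r₀ i).rTensor E) z
      = l • ((coordMap k L M r₀ j).rTensor E) z := by
  set b := Module.finBasis k L with hb
  induction z using TensorProduct.induction_on with
  | zero => simp
  | tmul m y =>
    have ht : ∀ i : Fin (Module.finrank k L),
        algebraMap k E (b.coord j (b i * l)) • ((coordMap k L M r₀ i).rTensor E) (m ⊗ₜ[k] y)
          = (b.coord j (b i * l) • coordMap k L M r₀ i m) ⊗ₜ[k] y := by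
      intro i
      rw [LinearMap.rTensor_tmul, eMod_smul_tmul, ← Algebra.smul_def, tmul_smul,
        smul_tmul']
    rw [Finset.sum_congr rfl fun i _ => ht i, ← TensorProduct.sum_tmul,
      keyM, LinearMap.rTensor_tmul, smul_tmul']
  | add z₁ z₂ h₁ h₂ =>
    have hsplit : ∀ i : Fin (Module.finrank k L),
        algebraMap k E (b.coord j (b i * l)) • ((coordMap k L M r₀ i).rTensor E) (z₁ + z₂)
          = algebraMap k E (b.coord j (b i * l)) • ((coordMap k L M r₀ i).rTensor E) z₁
            + algebraMap k E (b.coord j (b i * l)) • ((coordMap k L M r₀ i).rTensor E) z₂ :=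
      fun i => by rw [map_add, smul_add]
    rw [Finset.sum_congr rfl fun i _ => hsplit i, Finset.sum_add_distrib, h₁, h₂,
      map_add, smul_add]

/-- The retraction `Hom_E(L ⊗ E, M ⊗ E) → M ⊗ E` built from `r₀`. -/
noncomputable def retrE : Coind E (L ⊗[k] E) (M ⊗[k] E) →ₗ[L ⊗[k] E] (M ⊗[k] E) where
  toFun F := ∑ i, ((coordMap k L M r₀ i).rTensor E)
    (F.lin ((Module.finBasis k L) i ⊗ₜ[k] (1 : E)))
  map_add' F₁ F₂ := by
    show ∑ i, _ = (∑ i, _) + ∑ i, _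
    rw [← Finset.sum_add_distrib]
    exact Finset.sum_congr rfl fun i _ => by rw [Coind.lin_add, map_add]
  map_smul' u F := by
    rw [RingHom.id_apply]
    set b := Module.finBasis k L with hb
    show ∑ i, ((coordMap k L M r₀ i).rTensor E) ((u • F).lin (b i ⊗ₜ[k] (1 : E)))
      = u • ∑ i, ((coordMap k L M r₀ i).rTensor E) (F.lin (b i ⊗ₜ[k] (1 : E)))
    induction u using TensorProduct.induction_on with
    | zero =>
      have h0 : ∀ i : Fin (Module.finrank k L),
          ((coordMap k L M r₀ i).rTensor E)
            (((0 : L ⊗[k] E) • F).lin (b i ⊗ₜ[k] (1 : E))) = 0 := by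
        intro i
        rw [Coind.lin_smul, mul_zero, map_zero, map_zero]
      rw [Finset.sum_congr rfl fun i _ => h0 i, Finset.sum_const_zero, zero_smul]
    | add u₁ u₂ h₁ h₂ =>
      have ha : ∀ i : Fin (Module.finrank k L),
          ((coordMap k L M r₀ i).rTensor E) (((u₁ + u₂) • F).lin (b i ⊗ₜ[k] (1 : E)))
            = ((coordMap k L M r₀ i).rTensor E) ((u₁ • F).lin (b i ⊗ₜ[k] (1 : E)))
              + ((coordMap k L M r₀ i).rTensor E) ((u₂ • F).lin (b i ⊗ₜ[k] (1 : E))) := by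
        intro i
        rw [Coind.lin_smul, Coind.lin_smul, Coind.lin_smul, mul_add, map_add, map_add]
      rw [Finset.sum_congr rfl fun i _ => ha i, Finset.sum_add_distrib, h₁, h₂, add_smul]
    | tmul l e =>
      have hterm : ∀ i : Fin (Module.finrank k L),
          ((l ⊗ₜ[k] e) • F).lin (b i ⊗ₜ[k] (1 : E))
            = ∑ jj, algebraMap k E (b.coord jj (b i * l))
                • (e • F.lin (b jj ⊗ₜ[k] (1 : E))) := by
        intro i
        rw [Coind.lin_smul]
        have e1 : (b i ⊗ₜ[k] (1 : E)) * (l ⊗ₜ[k] e) = (b i * l) ⊗ₜ[k] e := by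
          rw [Algebra.TensorProduct.tmul_mul_tmul, one_mul]
        have e2 : ((b i * l) ⊗ₜ[k] e : L ⊗[k] E)
            = ∑ jj, b.repr (b i * l) jj • ((b jj : L) ⊗ₜ[k] e) := by
          conv_lhs => rw [← Module.Basis.sum_repr b (b i * l)]
          rw [TensorProduct.sum_tmul]
          exact Finset.sum_congr rfl fun jj _ => by rw [smul_tmul']
        rw [e1, e2, map_sum]
        refine Finset.sum_congr rfl fun jj _ => ?_
        -- `F.lin (c •ₖ w) = algebraMap k E c • F.lin w` and `b jj ⊗ e = e • (b jj ⊗ 1)`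
        have e3 : (b.repr (b i * l) jj • ((b jj : L) ⊗ₜ[k] e) : L ⊗[k] E)
            = algebraMap k E (b.repr (b i * l) jj) • e • ((b jj : L) ⊗ₜ[k] (1 : E)) := by
          show _ = algebraMap k E (b.repr (b i * l) jj)
            • (e • ((b jj : L) ⊗ₜ[k] (1 : E)) : L ⊗[k] E)
          rw [eMod_smul_tmul, mul_one, eMod_smul_tmul, ← Algebra.smul_def, tmul_smul]
        rw [e3, map_smul, map_smul]
        rw [Module.Basis.coord_apply]
      have hterm' : ∀ i : Fin (Module.finrank k L),
          ((coordMap k L M r₀ i).rTensor E) (((l ⊗ₜ[k] e) • F).lin (b i ⊗ₜ[k] (1 : E)))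
            = ∑ jj, ((coordMap k L M r₀ i).rTensor E)
                (algebraMap k E (b.coord jj (b i * l))
                  • (e • F.lin (b jj ⊗ₜ[k] (1 : E)))) :=
        fun i => by rw [hterm i, map_sum]
      rw [Finset.sum_congr rfl fun i _ => hterm' i]
      have hswap : ∀ (i jj : Fin (Module.finrank k L)),
          ((coordMap k L M r₀ i).rTensor E)
              (algebraMap k E (b.coord jj (b i * l)) • (e • F.lin (b jj ⊗ₜ[k] (1 : E))))
            = e • (algebraMap k E (b.coord jj (b i * l))
                • ((coordMap k L M r₀ i).rTensor E) (F.lin (b jj ⊗ₜ[k] (1 : E)))) := by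
        intro i jj
        rw [rTensor_eMod, rTensor_eMod, smul_smul, smul_smul, mul_comm]
      rw [Finset.sum_congr rfl fun i _ => Finset.sum_congr rfl fun jj _ => hswap i jj]
      have hfac : ∀ i : Fin (Module.finrank k L),
          ∑ jj, e • (algebraMap k E (b.coord jj (b i * l))
              • ((coordMap k L M r₀ i).rTensor E) (F.lin (b jj ⊗ₜ[k] (1 : E))))
            = e • ∑ jj, algebraMap k E (b.coord jj (b i * l))
              • ((coordMap k L M r₀ i).rTensor E) (F.lin (b jj ⊗ₜ[k] (1 : E))) :=
        fun i => (Finset.smul_sum).symm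
      rw [Finset.sum_congr rfl fun i _ => hfac i, ← Finset.smul_sum, Finset.sum_comm]
      rw [Finset.sum_congr rfl fun jj _ => keyT k E L M r₀ l jj (F.lin (b jj ⊗ₜ[k] (1 : E)))]
      rw [← Finset.smul_sum, bigMod_smul_def]
      exact (smul_comm l e _).symm

lemma retr_unit (hr₀ : ∀ m : M, r₀ (unitC k L M m) = m) (z : M ⊗[k] E) :
    retrE k E L M r₀ (unitE k E L M z) = z := by
  induction z using TensorProduct.induction_on with
  | zero => rw [map_zero, map_zero]
  | tmul m e =>
    show ∑ i, ((coordMap k L M r₀ i).rTensor E)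
        ((unitE k E L M (m ⊗ₜ[k] e)).lin ((Module.finBasis k L) i ⊗ₜ[k] (1 : E))) = m ⊗ₜ[k] e
    set b := Module.finBasis k L with hb
    have h1 : ∀ i : Fin (Module.finrank k L),
        ((coordMap k L M r₀ i).rTensor E)
            ((unitE k E L M (m ⊗ₜ[k] e)).lin (b i ⊗ₜ[k] (1 : E)))
          = (coordMap k L M r₀ i (b i • m)) ⊗ₜ[k] e := by
      intro i
      show ((coordMap k L M r₀ i).rTensor E) ((b i ⊗ₜ[k] (1 : E)) • (m ⊗ₜ[k] e)) = _
      rw [bigMod_smul_def, eMod_smul_tmul, one_mul, smul_tmul', LinearMap.rTensor_tmul]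
    rw [Finset.sum_congr rfl fun i _ => h1 i, ← TensorProduct.sum_tmul]
    congr 1
    have h2 : ∑ i, coordMap k L M r₀ i ((b i : L) • m) = r₀ (unitC k L M m) := by
      have h3 : ∑ i, Coind.mk' ((b.coord i).smulRight ((b i : L) • m)) = unitC k L M m := by
        ext x
        rw [Coind.lin_sum]
        show ∑ i, b.coord i x • ((b i : L) • m) = (unitC k L M m).lin x
        have h4 : ∀ i : Fin (Module.finrank k L),
            b.coord i x • ((b i : L) • m) = (b.coord i x • (b i : L)) • m := by
          intro i
          rw [smul_assoc]
        rw [Finset.sum_congr rfl fun i _ => h4 i, ← Finset.sum_smul]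
        have h5 : ∑ i, b.coord i x • (b i : L) = x := by
          refine (Finset.sum_congr rfl fun i _ => by rw [Module.Basis.coord_apply]).trans ?_
          exact Module.Basis.sum_repr b x
        rw [h5]
        rfl
      rw [← h3, map_sum]
      rfl
    rw [h2, hr₀]
  | add z₁ z₂ h₁ h₂ => rw [map_add, map_add, h₁, h₂]

end Forward

theorem forward [FiniteDimensional k L] (inj : Module.Injective L M) :
    Module.Injective (L ⊗[k] E) (M ⊗[k] E) := by
  have hinj : Function.Injective (unitC k L M) := by
    intro m₁ m₂ h
    have := congrArg (fun f : Coind k L M => f.lin 1) h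
    simpa [unitC, Coind.lin_mk', one_smul] using this
  obtain ⟨r₀, hr₀⟩ := inj.out (unitC k L M) hinj LinearMap.id
  exact injective_of_retract (unitE k E L M) (retrE k E L M r₀)
    (retr_unit k E L M r₀ hr₀) (Coind.module_injective)

set_option synthInstance.maxHeartbeats 800000 in
set_option maxHeartbeats 1600000 in
theorem backward (inj : Module.Injective (L ⊗[k] E) (M ⊗[k] E)) :
    Module.Injective L M := by
  apply Module.Baer.injective
  intro I g
  -- a `k`-linear retraction of `k → E`
  obtain ⟨π, hπ⟩ := (Algebra.linearMap k E).exists_leftInverse_of_injective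
    (LinearMap.ker_eq_bot.mpr (algebraMap k E).injective)
  have hπ1 : π 1 = 1 := by
    have := congrArg (fun t => t (1 : k)) hπ
    simpa using this
  -- tensor the inclusion `I → L` and the map `g` with `E`
  let ψ : (I ⊗[k] E) →ₗ[k] (L ⊗[k] E) := (I.subtype.restrictScalars k).rTensor E
  have hψ : Function.Injective ψ :=
    Module.Flat.rTensor_preserves_injective_linearMap
      (I.subtype.restrictScalars k) (by exact Subtype.val_injective)
  let gE : (I ⊗[k] E) →ₗ[k] (M ⊗[k] E) := (g.restrictScalars k).rTensor E
  have hψt : ∀ (x : I) (e : E), ψ (x ⊗ₜ[k] e) = (x : L) ⊗ₜ[k] e := fun x e => rfl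
  have hgEt : ∀ (x : I) (e : E), gE (x ⊗ₜ[k] e) = g x ⊗ₜ[k] e := fun x e => rfl
  -- the key compatibility of `ψ` and `gE` with the `L ⊗ E`-action
  have key : ∀ (u : L ⊗[k] E) (v : I ⊗[k] E),
      ∃ v', ψ v' = u * ψ v ∧ gE v' = u • gE v := by
    intro u
    induction u using TensorProduct.induction_on with
    | zero =>
      intro v
      exact ⟨0, by simp, by simp⟩
    | tmul l e =>
      intro v
      induction v using TensorProduct.induction_on with
      | zero => exact ⟨0, by simp, by simp⟩
      | tmul x e' =>
        refine ⟨(l • x) ⊗ₜ[k] (e * e'), ?_, ?_⟩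
        · rw [hψt, hψt, Algebra.TensorProduct.tmul_mul_tmul]
          congr 1
        · rw [hgEt, hgEt, map_smul, bigMod_smul_def, eMod_smul_tmul, smul_tmul']
      | add v₁ v₂ h₁ h₂ =>
        obtain ⟨w₁, hw₁, hg₁⟩ := h₁
        obtain ⟨w₂, hw₂, hg₂⟩ := h₂
        exact ⟨w₁ + w₂, by rw [map_add, hw₁, hw₂, map_add, mul_add],
          by rw [map_add, hg₁, hg₂, map_add, smul_add]⟩
    | add u₁ u₂ h₁ h₂ =>
      intro v
      obtain ⟨w₁, hw₁, hg₁⟩ := h₁ v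
      obtain ⟨w₂, hw₂, hg₂⟩ := h₂ v
      exact ⟨w₁ + w₂, by rw [map_add, hw₁, hw₂, add_mul],
        by rw [map_add, hg₁, hg₂, add_smul]⟩
  -- the ideal `J = I ⊗ E` of `L ⊗ E`
  let J : Ideal (L ⊗[k] E) :=
    { carrier := Set.range ψ
      add_mem' := by rintro _ _ ⟨v₁, rfl⟩ ⟨v₂, rfl⟩; exact ⟨v₁ + v₂, map_add ψ v₁ v₂⟩
      zero_mem' := ⟨0, map_zero ψ⟩
      smul_mem' := by
        rintro u _ ⟨v, rfl⟩
        obtain ⟨v', hv', -⟩ := key u v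
        exact ⟨v', by rw [hv']; rfl⟩ }
  have memJ : ∀ w : J, ∃ v : I ⊗[k] E, ψ v = (w : L ⊗[k] E) := fun w => w.2
  let pre : J → I ⊗[k] E := fun w => Classical.choose (memJ w)
  have hpre : ∀ w : J, ψ (pre w) = (w : L ⊗[k] E) := fun w => Classical.choose_spec (memJ w)
  let gJ : J →ₗ[L ⊗[k] E] (M ⊗[k] E) :=
    { toFun := fun w => gE (pre w)
      map_add' := fun w₁ w₂ => by
        have h : pre (w₁ + w₂) = pre w₁ + pre w₂ := hψ (by rw [hpre, map_add, hpre, hpre]; rfl)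
        show gE (pre (w₁ + w₂)) = gE (pre w₁) + gE (pre w₂)
        rw [h, map_add]
      map_smul' := fun u w => by
        obtain ⟨v', hv', hg'⟩ := key u (pre w)
        have h : pre (u • w) = v' := hψ (by rw [hpre, hv', hpre]; rfl)
        show gE (pre (u • w)) = u • gE (pre w)
        rw [h, hg'] }
  obtain ⟨h', hh'⟩ := Module.Baer.of_injective inj J gJ
  -- the retraction `M ⊗ E → M`
  let bilin : M →ₗ[k] (E →ₗ[k] M) :=
    { toFun := fun m => π.smulRight m
      map_add' := fun m₁ m₂ => by ext e; show π e • (m₁ + m₂) = π e • m₁ + π e • m₂; rw [smul_add]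
      map_smul' := fun c m => by ext e; show π e • (c • m) = c • (π e • m); rw [smul_comm] }
  let piE : (M ⊗[k] E) →ₗ[k] M := TensorProduct.lift bilin
  have hpiE : ∀ (m : M) (e : E), piE (m ⊗ₜ[k] e) = π e • m := fun m e => rfl
  have hpiEsmul : ∀ (l : L) (z : M ⊗[k] E), piE ((l ⊗ₜ[k] (1 : E)) • z) = l • piE z := by
    intro l z
    induction z using TensorProduct.induction_on with
    | zero => simp
    | tmul m e =>
      rw [bigMod_smul_def, eMod_smul_tmul, one_mul, smul_tmul', hpiE, hpiE, smul_comm]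
    | add z₁ z₂ h₁ h₂ => rw [smul_add, map_add, h₁, h₂, map_add, smul_add]
  refine ⟨{ toFun := fun l => piE (h' (l ⊗ₜ[k] (1 : E)))
            map_add' := fun l₁ l₂ => by
              show piE (h' ((l₁ + l₂) ⊗ₜ[k] (1 : E))) = _
              rw [add_tmul, map_add, map_add]
            map_smul' := fun l' l => by
              show piE (h' ((l' • l) ⊗ₜ[k] (1 : E))) = l' • piE (h' (l ⊗ₜ[k] (1 : E)))
              rw [smul_eq_mul]
              have : (l' * l) ⊗ₜ[k] (1 : E) = (l' ⊗ₜ[k] (1 : E)) • (l ⊗ₜ[k] (1 : E)) := by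
                rw [smul_eq_mul, Algebra.TensorProduct.tmul_mul_tmul, mul_one]
              rw [this, map_smul, hpiEsmul] }, ?_⟩
  intro x hx
  have hmem : (x ⊗ₜ[k] (1 : E)) ∈ J := ⟨(⟨x, hx⟩ : I) ⊗ₜ[k] (1 : E), rfl⟩
  show piE (h' (x ⊗ₜ[k] (1 : E))) = g ⟨x, hx⟩
  rw [hh' _ hmem]
  have : pre ⟨x ⊗ₜ[k] (1 : E), hmem⟩ = (⟨x, hx⟩ : I) ⊗ₜ[k] (1 : E) := hψ (by rw [hpre]; rfl)
  show piE (gE (pre ⟨x ⊗ₜ[k] (1 : E), hmem⟩)) = g ⟨x, hx⟩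
  rw [this, hgEt, hpiE, hπ1, one_smul]

/-- Let `Λ` be a finite-dimensional algebra over a field `k`, `E/k` a
field extension, and `M` a finite-dimensional left `Λ`-module.  Then `M` is an injective
`Λ`-module if and only if `M ⊗_k E` is an injective `Λ ⊗_k E`-module. -/
theorem injective_iff_injective_tensor [FiniteDimensional k L] [FiniteDimensional k M] :
    Module.Injective L M ↔ Module.Injective (L ⊗[k] E) (M ⊗[k] E) :=
  ⟨forward k E L M, backward k E L M⟩
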